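/- Let L be a nonzero Gaussian integer and s a Gaussian integer with 4·N(s) < N(L). Then for any Gaussian integers x and r such that x ≡ s (mod L), r ∈ 𝓕̄(L), and x ≡ r (mod L), one has r = s. (In particular the correctly recovered secret by an authorized coalition, computed as any fundamental-domain remainder of a solution of the congruence system modulo any associate of lcm(A), equals s.) -/
import Mathlib


/-- The closed fundamental domain `𝓕̄(z)` of a Gaussian integer `z`:
the closed square `{ z(α + βi) : -1/2 ≤ α ≤ 1/2, -1/2 ≤ β ≤ 1/2 }` in `ℂ`. -/
def FdC (z : GaussianInt) : Set ℂ :=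
  { w | ∃ α β : ℝ, w = (GaussianInt.toComplex z) * (α + β * Complex.I) ∧
      -(1/2 : ℝ) ≤ α ∧ α ≤ 1/2 ∧ -(1/2 : ℝ) ≤ β ∧ β ≤ 1/2 }

/-- If `4 * N(s) < N(L)`, then any fundamental-domain remainder `r ∈ 𝓕̄(L)` of any
solution `x` of `x ≡ s (mod L)` equals `s`: an authorized coalition recovers the
secret. -/
theorem secret_recovered (L s : GaussianInt) (hL : L ≠ 0)
    (hs : 4 * s.norm < L.norm) :
    ∀ x r : GaussianInt, L ∣ x - s → GaussianInt.toComplex r ∈ FdC L → L ∣ x - r →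
      r = s := by
  intro x r hxs hrF hxr
  have hdvd : L ∣ r - s := by
    have h : r - s = (x - s) - (x - r) := by ring
    rw [h]; exact dvd_sub hxs hxr
  obtain ⟨k, hk⟩ := hdvd
  by_contra hne
  have hk0 : k ≠ 0 := by
    rintro rfl
    apply hne
    have : r - s = 0 := by simpa using hk
    linear_combination this
  obtain ⟨α, β, hr, hα1, hα2, hβ1, hβ2⟩ := hrF
  -- pass to ℂ
  have hkC : (GaussianInt.toComplex r) - GaussianInt.toComplex s =
      GaussianInt.toComplex L * GaussianInt.toComplex k := by
    rw [← map_mul, ← map_sub, hk]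
  have hsC : GaussianInt.toComplex s =
      GaussianInt.toComplex L * ((α + β * Complex.I) - GaussianInt.toComplex k) := by
    rw [mul_sub, ← hr]; linear_combination -hkC
  set a : ℝ := ((k.re : ℤ) : ℝ)
  set b : ℝ := ((k.im : ℤ) : ℝ)
  have hkd : GaussianInt.toComplex k = Complex.mk a b := GaussianInt.toComplex_def₂ k
  have hab : (1:ℝ) ≤ |a| ∨ (1:ℝ) ≤ |b| := by
    have : k.re ≠ 0 ∨ k.im ≠ 0 := by
      by_contra h
      push_neg at h
      exact hk0 (Zsqrtd.ext h.1 h.2)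
    rcases this with h | h
    · left
      have h1 : (1 : ℤ) ≤ |k.re| := Int.one_le_abs h
      simp only [a, ← Int.cast_abs]
      exact_mod_cast h1
    · right
      have h1 : (1 : ℤ) ≤ |k.im| := Int.one_le_abs h
      simp only [b, ← Int.cast_abs]
      exact_mod_cast h1
  -- norm computation
  have hnorm : (s.norm : ℝ) = (L.norm : ℝ) * ((α - a) ^ 2 + (β - b) ^ 2) := by
    rw [GaussianInt.intCast_real_norm, GaussianInt.intCast_real_norm, hsC, map_mul]
    congr 1
    rw [hkd]
    simp [Complex.normSq_apply, Complex.ext_iff]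
    ring
  have hLpos : (0 : ℝ) < (L.norm : ℝ) := by
    have := GaussianInt.norm_pos.mpr hL
    exact_mod_cast this
  have hbig : (α - a) ^ 2 + (β - b) ^ 2 ≥ 1 / 4 := by
    rcases hab with h | h
    · have h2 : |α| ≤ 1/2 := abs_le.mpr ⟨hα1, hα2⟩
      have h3 : |a| - |α| ≤ |α - a| := by
        rw [abs_sub_comm]; exact abs_sub_abs_le_abs_sub a α
      nlinarith [sq_abs (α - a), sq_nonneg (β - b)]
    · have h2 : |β| ≤ 1/2 := abs_le.mpr ⟨hβ1, hβ2⟩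
      have h3 : |b| - |β| ≤ |β - b| := by
        rw [abs_sub_comm]; exact abs_sub_abs_le_abs_sub b β
      nlinarith [sq_abs (β - b), sq_nonneg (α - a)]
  have : (L.norm : ℝ) ≤ 4 * (s.norm : ℝ) := by
    rw [hnorm]; nlinarith
  have hsR : (4 : ℝ) * (s.norm : ℝ) < (L.norm : ℝ) := by exact_mod_cast hs
  linarith
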